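/- Let μ ≤ λ be real numbers and let θ : [μ, λ] → ℝ be strictly increasing. Then the set {x ∈ [μ, λ] : θ(x) ∈ π·ℤ} is finite and its cardinality is at most (θ(λ) − θ(μ))/π + 1. -/

import Mathlib

open Set

/-- **Counting bound for hitting points of `πℤ` by a strictly increasing function.**
If `θ : [μ,λ] → ℝ` is strictly increasing, then the set of points of `[μ,λ]` at which
`θ` takes a value in `πℤ` is finite, with cardinality at most `(θ(λ) − θ(μ))/π + 1`. -/
theorem card_hitting_pi_multiples_le
    (μ lam : ℝ) (hle : μ ≤ lam) (θ : ℝ → ℝ) (hθ : StrictMonoOn θ (Icc μ lam)) :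
    {x ∈ Icc μ lam | ∃ n : ℤ, θ x = n * Real.pi}.Finite ∧
    ({x ∈ Icc μ lam | ∃ n : ℤ, θ x = n * Real.pi}.ncard : ℝ)
      ≤ (θ lam - θ μ) / Real.pi + 1 := by
  have hπ : (0:ℝ) < Real.pi := Real.pi_pos
  set S := {x ∈ Icc μ lam | ∃ n : ℤ, θ x = n * Real.pi} with hS
  set f : ℝ → ℤ := fun x => ⌈θ x / Real.pi⌉ with hf
  set a : ℤ := ⌈θ μ / Real.pi⌉ with ha
  set b : ℤ := ⌊θ lam / Real.pi⌋ with hb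
  have hfval : ∀ x ∈ S, (f x : ℝ) * Real.pi = θ x := by
    rintro x ⟨hx, n, hn⟩
    have : θ x / Real.pi = (n : ℝ) := by
      field_simp [hn]
      rw [hn]; ring
    simp only [hf, this, Int.ceil_intCast]
    linarith [hn]
  have hinj : Set.InjOn f S := by
    rintro x hx y hy hxy
    have : θ x = θ y := by
      rw [← hfval x hx, ← hfval y hy, hxy]
    exact hθ.injOn hx.1 hy.1 this
  have hmem : ∀ x ∈ S, f x ∈ Finset.Icc a b := by
    rintro x hx
    have h1 : θ μ ≤ θ x := by
      rcases eq_or_lt_of_le hx.1.1 with h | h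
      · rw [h]
      · exact le_of_lt (hθ (left_mem_Icc.2 hle) hx.1 h)
    have h2 : θ x ≤ θ lam := by
      rcases eq_or_lt_of_le hx.1.2 with h | h
      · rw [h]
      · exact le_of_lt (hθ hx.1 (right_mem_Icc.2 hle) h)
    have hfx := hfval x hx
    have hfx' : ((f x : ℤ) : ℝ) = θ x / Real.pi := eq_div_of_mul_eq hπ.ne' hfx
    refine Finset.mem_Icc.2 ⟨Int.ceil_le_ceil (by gcongr), Int.le_floor.2 ?_⟩
    rw [hfx']
    gcongr
  have hmaps : Set.MapsTo f S ↑(Finset.Icc a b) := fun x hx => hmem x hx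
  have hfin : S.Finite := Set.Finite.of_finite_image
    ((Finset.Icc a b).finite_toSet.subset (Set.image_subset_iff.2 hmaps)) hinj
  refine ⟨hfin, ?_⟩
  have hcard : S.ncard ≤ (Finset.Icc a b).card := by
    have h1 := Set.ncard_le_ncard (Set.image_subset_iff.2 hmaps) (Finset.Icc a b).finite_toSet
    rw [Set.ncard_image_of_injOn hinj] at h1
    exact h1.trans (Set.ncard_coe_finset _).le
  have hcardval : (Finset.Icc a b).card = (b + 1 - a).toNat := Int.card_Icc a b
  have haθ : θ μ / Real.pi ≤ (a : ℝ) := Int.le_ceil _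
  have hbθ : (b : ℝ) ≤ θ lam / Real.pi := Int.floor_le _
  have hθle : θ μ ≤ θ lam := by
    rcases eq_or_lt_of_le hle with h | h
    · rw [h]
    · exact le_of_lt (hθ (left_mem_Icc.2 hle) (right_mem_Icc.2 hle) h)
  have hrhs : (0:ℝ) ≤ (θ lam - θ μ) / Real.pi + 1 := by
    have : (0:ℝ) ≤ (θ lam - θ μ) / Real.pi := div_nonneg (by linarith) hπ.le
    linarith
  calc (S.ncard : ℝ) ≤ ((b + 1 - a).toNat : ℝ) := by exact_mod_cast hcard.trans_eq hcardval
    _ ≤ (θ lam - θ μ) / Real.pi + 1 := by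
        rcases le_or_gt (b + 1 - a) 0 with h | h
        · rw [Int.toNat_of_nonpos h]; simpa using hrhs
        · have ht : ((b + 1 - a).toNat : ℝ) = (b:ℝ) + 1 - a := by
            exact_mod_cast congrArg (fun n : ℤ => (n:ℝ)) (Int.toNat_of_nonneg h.le)
          rw [ht, sub_div]
          linarith
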